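/- For every M > 0, one has (1 − λD) + ∫₀^M f_W(w) dw = P_W(M); that is, the value of the auxiliary function θ(M, 0) := ∫₀^M f_W(w) dw equals P_W(M) minus the atom mass 1 − λD at zero. -/

import Mathlib

open Real MeasureTheory Filter

/-- Stationary waiting-time CDF of the M/D/1 queue (Erlang's formula),
extended by `0` on the negative reals. -/
noncomputable def PW (lam D w : ℝ) : ℝ :=
  if w < 0 then 0 else
    (1 - lam * D) * ∑ k ∈ Finset.range (⌊w / D⌋₊ + 1),
      (-(lam * (w - (k : ℝ) * D))) ^ k * Real.exp (lam * (w - (k : ℝ) * D)) /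
        (Nat.factorial k)

/-- Continuous part of the stationary waiting-time density of the M/D/1 queue. -/
noncomputable def fW (lam D w : ℝ) : ℝ :=
  (1 - lam * D) * (lam * Real.exp (lam * w) +
    ∑ k ∈ Finset.Icc 1 ⌊w / D⌋₊,
      (-lam) ^ k * (w - (k : ℝ) * D) ^ (k - 1) * Real.exp (lam * (w - (k : ℝ) * D)) *
        ((k : ℝ) + lam * (w - (k : ℝ) * D)) / (Nat.factorial k))

/-- `PW` with floor frozen at `n`. -/
noncomputable def Fn (lam D : ℝ) (n : ℕ) (w : ℝ) : ℝ :=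
  (1 - lam * D) * ∑ k ∈ Finset.range (n + 1),
    (-(lam * (w - (k : ℝ) * D))) ^ k * Real.exp (lam * (w - (k : ℝ) * D)) /
      (Nat.factorial k)

/-- `fW` with floor frozen at `n`. -/
noncomputable def fn (lam D : ℝ) (n : ℕ) (w : ℝ) : ℝ :=
  (1 - lam * D) * (lam * Real.exp (lam * w) +
    ∑ k ∈ Finset.Icc 1 n,
      (-lam) ^ k * (w - (k : ℝ) * D) ^ (k - 1) * Real.exp (lam * (w - (k : ℝ) * D)) *
        ((k : ℝ) + lam * (w - (k : ℝ) * D)) / (Nat.factorial k))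

lemma term_hasDerivAt (lam D : ℝ) (k : ℕ) (hk : 1 ≤ k) (w : ℝ) :
    HasDerivAt (fun w : ℝ => (-(lam * (w - (k : ℝ) * D))) ^ k *
        Real.exp (lam * (w - (k : ℝ) * D)) / (Nat.factorial k))
      ((-lam) ^ k * (w - (k : ℝ) * D) ^ (k - 1) * Real.exp (lam * (w - (k : ℝ) * D)) *
        ((k : ℝ) + lam * (w - (k : ℝ) * D)) / (Nat.factorial k)) w := by
  obtain ⟨m, rfl⟩ : ∃ m, k = m + 1 := ⟨k - 1, (Nat.succ_pred_eq_of_pos hk).symm⟩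
  set c : ℝ := ((m + 1 : ℕ) : ℝ) * D with hc
  have h1 : HasDerivAt (fun w : ℝ => w - c) 1 w := (hasDerivAt_id w).sub_const c
  have hpow : HasDerivAt (fun w : ℝ => (w - c) ^ (m + 1))
      (((m + 1 : ℕ) : ℝ) * (w - c) ^ m * 1) w := by
    simpa using h1.fun_pow (m + 1)
  have hexp : HasDerivAt (fun w : ℝ => Real.exp (lam * (w - c)))
      (Real.exp (lam * (w - c)) * (lam * 1)) w := by
    exact (HasDerivAt.exp (((hasDerivAt_id w).sub_const c).const_mul lam))
  have hmul := hpow.fun_mul hexp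
  have hfinal := (hmul.const_mul ((-lam) ^ (m + 1) / (Nat.factorial (m + 1) : ℝ)))
  have hfun : (fun w : ℝ => (-lam) ^ (m + 1) / (Nat.factorial (m + 1) : ℝ) *
      ((w - c) ^ (m + 1) * Real.exp (lam * (w - c)))) =
      (fun w : ℝ => (-(lam * (w - c))) ^ (m + 1) * Real.exp (lam * (w - c)) /
        (Nat.factorial (m + 1))) := by
    funext x
    have : (-(lam * (x - c))) ^ (m + 1) = (-lam) ^ (m + 1) * (x - c) ^ (m + 1) := by
      rw [← neg_mul, mul_pow]
    rw [this]; ring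
  rw [hfun] at hfinal
  convert hfinal using 1
  · rfl
  · rfl
  simp only [Nat.add_sub_cancel]
  have : (w - c) ^ (m + 1) = (w - c) ^ m * (w - c) := pow_succ _ _
  rw [this]; push_cast; ring

lemma fn_continuous (lam D : ℝ) (n : ℕ) : Continuous (fn lam D n) := by
  unfold fn
  apply Continuous.mul continuous_const
  apply Continuous.add (by fun_prop)
  apply continuous_finset_sum
  intro k _
  fun_prop

lemma Fn_hasDerivAt (lam D : ℝ) (n : ℕ) (w : ℝ) :
    HasDerivAt (Fn lam D n) (fn lam D n w) w := by
  have hset : Finset.range (n + 1) = insert 0 (Finset.Icc 1 n) := by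
    ext k; simp [Finset.mem_range, Finset.mem_Icc]; omega
  have hnot : (0 : ℕ) ∉ Finset.Icc 1 n := by simp
  have hFn : Fn lam D n = fun w => (1 - lam * D) *
      ((-(lam * (w - ((0 : ℕ) : ℝ) * D))) ^ 0 * Real.exp (lam * (w - ((0 : ℕ) : ℝ) * D)) /
        (Nat.factorial 0) +
       ∑ k ∈ Finset.Icc 1 n,
        (-(lam * (w - (k : ℝ) * D))) ^ k * Real.exp (lam * (w - (k : ℝ) * D)) /
          (Nat.factorial k)) := by
    funext x
    unfold Fn
    rw [hset, Finset.sum_insert hnot]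
  rw [hFn]
  have h0 : HasDerivAt (fun w : ℝ => (-(lam * (w - ((0 : ℕ) : ℝ) * D))) ^ 0 *
      Real.exp (lam * (w - ((0 : ℕ) : ℝ) * D)) / (Nat.factorial 0))
      (lam * Real.exp (lam * w)) w := by
    have : (fun w : ℝ => (-(lam * (w - ((0 : ℕ) : ℝ) * D))) ^ 0 *
        Real.exp (lam * (w - ((0 : ℕ) : ℝ) * D)) / (Nat.factorial 0)) =
        fun w : ℝ => Real.exp (lam * w) := by
      funext x; simp
    rw [this]
    have := (HasDerivAt.exp ((hasDerivAt_id w).const_mul lam))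
    simpa [mul_comm] using this
  have hsum : HasDerivAt (fun w : ℝ => ∑ k ∈ Finset.Icc 1 n,
      (-(lam * (w - (k : ℝ) * D))) ^ k * Real.exp (lam * (w - (k : ℝ) * D)) /
        (Nat.factorial k))
      (∑ k ∈ Finset.Icc 1 n,
        (-lam) ^ k * (w - (k : ℝ) * D) ^ (k - 1) * Real.exp (lam * (w - (k : ℝ) * D)) *
          ((k : ℝ) + lam * (w - (k : ℝ) * D)) / (Nat.factorial k)) w := by
    apply HasDerivAt.fun_sum
    intro k hkmem
    exact term_hasDerivAt lam D k (Finset.mem_Icc.mp hkmem).1 w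
  exact (h0.add hsum).const_mul (1 - lam * D)

lemma floor_eq (D : ℝ) (hD : 0 < D) (n : ℕ) (x : ℝ) (h1 : (n : ℝ) * D ≤ x)
    (h2 : x < ((n : ℝ) + 1) * D) : ⌊x / D⌋₊ = n := by
  have hx0 : (0 : ℝ) ≤ x / D := by
    apply div_nonneg _ hD.le
    exact le_trans (by positivity) h1
  rw [Nat.floor_eq_iff hx0]
  constructor
  · rw [le_div_iff₀ hD]; exact h1
  · rw [div_lt_iff₀ hD]; push_cast; exact h2

lemma PW_eq (lam D : ℝ) (hD : 0 < D) (n : ℕ) (x : ℝ) (h1 : (n : ℝ) * D ≤ x)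
    (h2 : x ≤ ((n : ℝ) + 1) * D) : PW lam D x = Fn lam D n x := by
  have hx0 : (0 : ℝ) ≤ x := le_trans (by positivity) h1
  rcases lt_or_eq_of_le h2 with h2' | h2'
  · unfold PW Fn
    rw [if_neg (not_lt.mpr hx0), floor_eq D hD n x h1 h2']
  · unfold PW Fn
    rw [if_neg (not_lt.mpr hx0)]
    have hfl : ⌊x / D⌋₊ = n + 1 := by
      apply floor_eq D hD (n + 1) x
      · push_cast; exact le_of_eq h2'.symm
      · push_cast; rw [h2']; nlinarith
    rw [hfl, Finset.sum_range_succ]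
    have hz : x - ((n + 1 : ℕ) : ℝ) * D = 0 := by push_cast; linarith
    rw [hz]
    simp

lemma fW_eq (lam D : ℝ) (hD : 0 < D) (n : ℕ) (x : ℝ) (h1 : (n : ℝ) * D < x)
    (h2 : x < ((n : ℝ) + 1) * D) : fW lam D x = fn lam D n x := by
  unfold fW fn
  rw [floor_eq D hD n x h1.le h2]

lemma seg (lam D : ℝ) (hD : 0 < D) (n : ℕ) (a b : ℝ) (ha : (n : ℝ) * D ≤ a)
    (hab : a ≤ b) (hb : b ≤ ((n : ℝ) + 1) * D) :
    IntervalIntegrable (fW lam D) volume a b ∧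
      ∫ w in a..b, fW lam D w = PW lam D b - PW lam D a := by
  have haeb : ∀ᵐ x : ℝ, x ≠ b := by
    rw [MeasureTheory.ae_iff]
    simp only [not_not]
    simpa [Set.setOf_eq_eq_singleton] using Real.volume_singleton (a := b)
  have hcongr : ∀ᵐ x ∂(volume : Measure ℝ), x ∈ Set.uIoc a b →
      fW lam D x = fn lam D n x := by
    filter_upwards [haeb] with x hx hxm
    rw [Set.uIoc_of_le hab] at hxm
    have hx1 : (n : ℝ) * D < x := lt_of_le_of_lt ha hxm.1
    have hx2 : x < ((n : ℝ) + 1) * D :=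
      lt_of_lt_of_le (lt_of_le_of_ne hxm.2 hx) hb
    exact fW_eq lam D hD n x hx1 hx2
  have hint_fn : IntervalIntegrable (fn lam D n) volume a b :=
    (fn_continuous lam D n).intervalIntegrable a b
  have hint_fW : IntervalIntegrable (fW lam D) volume a b := by
    apply hint_fn.congr_ae
    rw [Filter.EventuallyEq, MeasureTheory.ae_restrict_iff' measurableSet_uIoc]
    filter_upwards [hcongr] with x hx hxm
    exact (hx hxm).symm
  refine ⟨hint_fW, ?_⟩
  rw [intervalIntegral.integral_congr_ae hcongr]
  rw [intervalIntegral.integral_eq_sub_of_hasDerivAt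
    (fun x _ => Fn_hasDerivAt lam D n x) hint_fn]
  rw [PW_eq lam D hD n b (le_trans ha hab) hb,
    PW_eq lam D hD n a ha (le_trans hab hb)]

lemma main_ind (lam D : ℝ) (hD : 0 < D) : ∀ n : ℕ, ∀ x : ℝ, (n : ℝ) * D ≤ x →
    x ≤ ((n : ℝ) + 1) * D →
    IntervalIntegrable (fW lam D) volume 0 x ∧
      ∫ w in (0:ℝ)..x, fW lam D w = PW lam D x - (1 - lam * D) := by
  intro n
  induction n with
  | zero =>
    intro x h1 h2
    simp only [Nat.cast_zero, zero_mul] at h1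
    have hs := seg lam D hD 0 0 x (by simp) h1 (by push_cast at h2 ⊢; linarith)
    refine ⟨hs.1, ?_⟩
    rw [hs.2]
    have : PW lam D 0 = 1 - lam * D := by
      unfold PW
      norm_num
    rw [this]
  | succ n ih =>
    intro x h1 h2
    have hc : ((n : ℝ)) * D ≤ ((n : ℝ) + 1) * D := by nlinarith
    have ihc := ih (((n : ℝ) + 1) * D) hc le_rfl
    have h1' : ((n : ℝ) + 1) * D ≤ x := by push_cast at h1; linarith
    have h2' : x ≤ (((n : ℝ) + 1) + 1) * D := by push_cast at h2 ⊢; linarith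
    have hs := seg lam D hD (n + 1) (((n : ℝ) + 1) * D) x (by push_cast; linarith)
      h1' (by push_cast; push_cast at h2'; linarith)
    refine ⟨ihc.1.trans hs.1, ?_⟩
    rw [← intervalIntegral.integral_add_adjacent_intervals ihc.1 hs.1]
    rw [ihc.2, hs.2]
    ring

/-- `θ(M, 0) = ∫₀^M f_W(w) dw` equals `P_W(M)` minus the atom mass
`1 - λ D` at zero; that is, `(1 - λ D) + ∫₀^M f_W(w) dw = P_W(M)`. -/
theorem md1_theta_at_zero (lam D : ℝ) (hlam : 0 < lam) (hD : 0 < D)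
    (hstab : lam * D < 1) (M : ℝ) (hM : 0 < M) :
    (1 - lam * D) + ∫ w in (0:ℝ)..M, fW lam D w = PW lam D M := by
  set n := ⌊M / D⌋₊ with hn
  have h1 : (n : ℝ) * D ≤ M := by
    rw [← le_div_iff₀ hD]
    exact Nat.floor_le (le_of_lt (div_pos hM hD))
  have h2 : M ≤ ((n : ℝ) + 1) * D := by
    rw [← div_le_iff₀ hD]
    exact (Nat.lt_floor_add_one (M / D)).le
  have := (main_ind lam D hD n M h1 h2).2
  linarith
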